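/- Let n ≥ 2 and fix a perfect matching m' of K_{2n} and an edge e = ij with e ∉ m'. Then the number of perfect matchings m of K_{2n} such that ij ∈ m and m shares at least one edge with m' is strictly less than (2/5)(2n-3)!!. -/

import Mathlib

open Finset

variable {α : Type*} [DecidableEq α]

/-- perfect matchings of vertex set V -/
def pm (V : Finset α) : Finset (Finset (Finset α)) :=
  V.powerset.powerset.filter (fun m =>
    (∀ e ∈ m, e.card = 2) ∧
    (∀ e ∈ m, ∀ f ∈ m, e ≠ f → Disjoint e f) ∧
    m.biUnion id = V)

lemma mem_pm {V : Finset α} {m : Finset (Finset α)} :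
    m ∈ pm V ↔ (∀ e ∈ m, e.card = 2) ∧
      (∀ e ∈ m, ∀ f ∈ m, e ≠ f → Disjoint e f) ∧ m.biUnion id = V := by
  constructor
  · intro h; exact (mem_filter.mp h).2
  · intro h
    refine mem_filter.mpr ⟨?_, h⟩
    simp only [mem_powerset]
    intro e he
    rw [mem_powerset, ← h.2.2]
    exact subset_biUnion_of_mem id he

lemma edge_subset {V : Finset α} {m : Finset (Finset α)} (hm : m ∈ pm V)
    {e : Finset α} (he : e ∈ m) : e ⊆ V := by
  rw [← (mem_pm.mp hm).2.2]
  exact subset_biUnion_of_mem id he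

lemma pm_empty : pm (∅ : Finset α) = {∅} := by
  ext m
  simp only [mem_pm, mem_singleton]
  constructor
  · rintro ⟨h2, _, hU⟩
    by_contra hne
    obtain ⟨e, he⟩ := nonempty_iff_ne_empty.mpr hne
    have : e ⊆ ∅ := by rw [← hU]; exact subset_biUnion_of_mem id he
    have := h2 e he
    simp [Finset.subset_empty.mp ‹e ⊆ ∅›] at this
  · rintro rfl; simp

lemma exists_partner {V : Finset α} {m : Finset (Finset α)} (hm : m ∈ pm V)
    {v : α} (hv : v ∈ V) : ∃ w, w ∈ V ∧ w ≠ v ∧ ({v, w} : Finset α) ∈ m := by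
  obtain ⟨h2, hdisj, hU⟩ := mem_pm.mp hm
  rw [← hU] at hv
  obtain ⟨e, he, hve⟩ := mem_biUnion.mp hv
  obtain ⟨a, b, hab, rfl⟩ := Finset.card_eq_two.mp (h2 e he)
  simp only [id] at hve
  rcases mem_insert.mp hve with rfl | hb
  · refine ⟨b, ?_, hab.symm, he⟩
    exact edge_subset hm he (by simp)
  · rw [mem_singleton] at hb; subst hb
    refine ⟨a, edge_subset hm he (by simp), hab, ?_⟩
    rwa [Finset.pair_comm]

lemma erase_mem_pm {V : Finset α} {m : Finset (Finset α)} (hm : m ∈ pm V)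
    {e : Finset α} (he : e ∈ m) : m.erase e ∈ pm (V \ e) := by
  obtain ⟨h2, hdisj, hU⟩ := mem_pm.mp hm
  refine mem_pm.mpr ⟨fun f hf => h2 f (mem_of_mem_erase hf),
    fun f hf g hg hfg => hdisj f (mem_of_mem_erase hf) g (mem_of_mem_erase hg) hfg, ?_⟩
  ext x
  simp only [mem_biUnion, id, mem_sdiff, mem_erase]
  constructor
  · rintro ⟨f, ⟨hfe, hf⟩, hx⟩
    refine ⟨by rw [← hU]; exact mem_biUnion.mpr ⟨f, hf, hx⟩, fun hxe => ?_⟩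
    exact (disjoint_left.mp (hdisj f hf e he hfe)) hx hxe
  · rintro ⟨hxV, hxe⟩
    rw [← hU] at hxV
    obtain ⟨f, hf, hx⟩ := mem_biUnion.mp hxV
    exact ⟨f, ⟨fun h => hxe (h ▸ hx), hf⟩, hx⟩

lemma insert_mem_pm {V : Finset α} {m : Finset (Finset α)} (hm : m ∈ pm V)
    {e : Finset α} (he : e.card = 2) (hdV : Disjoint e V) :
    insert e m ∈ pm (V ∪ e) := by
  obtain ⟨h2, hdisj, hU⟩ := mem_pm.mp hm
  have hnotmem : ∀ f ∈ m, Disjoint e f := fun f hf =>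
    hdV.mono_right (edge_subset hm hf)
  refine mem_pm.mpr ⟨?_, ?_, ?_⟩
  · intro f hf
    rcases mem_insert.mp hf with rfl | hf
    · exact he
    · exact h2 f hf
  · intro f hf g hg hfg
    rcases mem_insert.mp hf with hfe | hf'
    · rcases mem_insert.mp hg with hge | hg'
      · exact absurd (hfe.trans hge.symm) hfg
      · rw [hfe]; exact hnotmem g hg'
    · rcases mem_insert.mp hg with hge | hg'
      · rw [hge]; exact (hnotmem f hf').symm
      · exact hdisj f hf' g hg' hfg
  · rw [biUnion_insert, hU]
    simp [union_comm]

lemma pm_decomp {V : Finset α} {v : α} (hv : v ∈ V) :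
    pm V = (V.erase v).biUnion
      (fun w => (pm (V \ {v, w})).image (insert ({v, w} : Finset α))) := by
  ext m
  simp only [mem_biUnion, mem_image, mem_erase]
  constructor
  · intro hm
    obtain ⟨w, hwV, hwv, hvw⟩ := exists_partner hm hv
    refine ⟨w, ⟨hwv, hwV⟩, m.erase {v, w}, erase_mem_pm hm hvw, insert_erase hvw⟩
  · rintro ⟨w, ⟨hwv, hwV⟩, m₀, hm₀, rfl⟩
    have hpair : ({v, w} : Finset α).card = 2 := card_pair (Ne.symm hwv)
    have hsub : ({v, w} : Finset α) ⊆ V := by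
      intro x hx; rcases mem_insert.mp hx with rfl | hx
      · exact hv
      · rw [mem_singleton] at hx; exact hx ▸ hwV
    have := insert_mem_pm hm₀ hpair disjoint_sdiff
    rwa [sdiff_union_of_subset hsub] at this

lemma edge_not_mem {V : Finset α} {m : Finset (Finset α)} (hm : m ∈ pm V)
    {e : Finset α} {x : α} (hx : x ∈ e) (hxV : x ∉ V) : e ∉ m := fun hem =>
  hxV (edge_subset hm hem hx)

lemma df_step : ∀ k : ℕ, Nat.doubleFactorial (2 * (k + 1) - 1)
    = (2 * k + 1) * Nat.doubleFactorial (2 * k - 1) := by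
  intro k
  cases k with
  | zero => simp [Nat.doubleFactorial]
  | succ j =>
    have h1 : 2 * (j + 1 + 1) - 1 = (2 * j + 1) + 2 := by omega
    have h2 : 2 * (j + 1) - 1 = 2 * j + 1 := by omega
    rw [h1, h2, Nat.doubleFactorial_add_two]
    ring_nf

lemma pm_card : ∀ (k : ℕ) (V : Finset α), V.card = 2 * k →
    (pm V).card = Nat.doubleFactorial (2 * k - 1) := by
  intro k
  induction k with
  | zero =>
    intro V hV
    rw [card_eq_zero] at hV
    subst hV
    simp [pm_empty]
  | succ k ih =>
    intro V hV
    have hne : V.Nonempty := card_pos.mp (by omega)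
    obtain ⟨v, hv⟩ := hne
    have hedge_sub : ∀ w, w ∈ V.erase v → ({v, w} : Finset α) ⊆ V := by
      intro w hw x hx
      rcases mem_insert.mp hx with rfl | hx
      · exact hv
      · rw [mem_singleton] at hx; exact hx ▸ (mem_of_mem_erase hw)
    have hcard_sd : ∀ w, w ∈ V.erase v → (V \ {v, w}).card = 2 * k := by
      intro w hw
      rw [card_sdiff_of_subset (hedge_sub w hw), card_pair (ne_of_mem_erase hw).symm, hV]
      omega
    rw [pm_decomp hv, card_biUnion]
    · have hterm : ∀ w ∈ V.erase v,
          ((pm (V \ {v, w})).image (insert ({v, w} : Finset α))).card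
            = Nat.doubleFactorial (2 * k - 1) := by
        intro w hw
        rw [card_image_of_injOn, ih _ (hcard_sd w hw)]
        intro m₀ hm₀ m₁ hm₁ heq
        have h₀ : ({v, w} : Finset α) ∉ m₀ :=
          edge_not_mem hm₀ (mem_insert_self v _) (by simp)
        have h₁ : ({v, w} : Finset α) ∉ m₁ :=
          edge_not_mem hm₁ (mem_insert_self v _) (by simp)
        rw [← erase_insert h₀, ← erase_insert h₁, heq]
      have h21 : 2 * (k + 1) - 1 = 2 * k + 1 := by omega
      rw [sum_congr rfl hterm, sum_const, card_erase_of_mem hv, hV, smul_eq_mul, df_step, h21]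
    · intro w₁ hw₁ w₂ hw₂ hne
      rw [Function.onFun, disjoint_left]
      intro m hm₁ hm₂
      obtain ⟨m₀, hm₀, rfl⟩ := mem_image.mp hm₁
      obtain ⟨m₁', hm₁', heq⟩ := mem_image.mp hm₂
      have hmem : ({v, w₁} : Finset α) ∈ insert ({v, w₂} : Finset α) m₁' := by
        rw [heq]; exact mem_insert_self _ _
      rcases mem_insert.mp hmem with h | h
      · have : w₁ ∈ ({v, w₂} : Finset α) := h ▸ (by simp : w₁ ∈ ({v, w₁} : Finset α))
        rcases mem_insert.mp this with h' | h'
        · exact (ne_of_mem_erase hw₁) h'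
        · rw [mem_singleton] at h'; exact hne h'
      · exact edge_not_mem hm₁' (mem_insert_self v _) (by simp) h

lemma pm_forced_card {V : Finset α} {S : Finset (Finset α)}
    (h2 : ∀ e ∈ S, e.card = 2)
    (hdisj : ∀ e ∈ S, ∀ f ∈ S, e ≠ f → Disjoint e f)
    (hSV : S.biUnion id ⊆ V) :
    ((pm V).filter (fun m => S ⊆ m)).card = (pm (V \ S.biUnion id)).card := by
  apply card_bij (fun m _ => m \ S)
  · -- maps into
    intro m hm
    rw [mem_filter] at hm
    obtain ⟨hmV, hSm⟩ := hm
    obtain ⟨hm2, hmd, hmU⟩ := mem_pm.mp hmV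
    refine mem_pm.mpr ⟨fun e he => hm2 e (mem_sdiff.mp he).1,
      fun e he f hf hef => hmd e (mem_sdiff.mp he).1 f (mem_sdiff.mp hf).1 hef, ?_⟩
    ext x
    simp only [mem_biUnion, id, mem_sdiff]
    constructor
    · rintro ⟨f, ⟨hfm, hfS⟩, hx⟩
      refine ⟨by rw [← hmU]; exact mem_biUnion.mpr ⟨f, hfm, hx⟩, ?_⟩
      rintro ⟨e, heS, hxe⟩
      have hef : e ≠ f := fun h => hfS (h ▸ heS)
      exact disjoint_left.mp (hmd e (hSm heS) f hfm hef) hxe hx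
    · rintro ⟨hxV, hxS⟩
      rw [← hmU] at hxV
      obtain ⟨f, hf, hx⟩ := mem_biUnion.mp hxV
      exact ⟨f, ⟨hf, fun hfS => hxS ⟨f, hfS, hx⟩⟩, hx⟩
  · -- injective
    intro m₁ hm₁ m₂ hm₂ heq
    rw [mem_filter] at hm₁ hm₂
    rw [← sdiff_union_of_subset hm₁.2, ← sdiff_union_of_subset hm₂.2, heq]
  · -- surjective
    intro m₀ hm₀
    obtain ⟨h02, h0d, h0U⟩ := mem_pm.mp hm₀
    have hm₀S : ∀ e ∈ m₀, e ∉ S := by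
      intro e he heS
      have h1 : e ⊆ V \ S.biUnion id := by rw [← h0U]; exact subset_biUnion_of_mem id he
      have hne : e.Nonempty := by rw [← card_pos, h02 e he]; norm_num
      obtain ⟨x, hx⟩ := hne
      exact (mem_sdiff.mp (h1 hx)).2 (mem_biUnion.mpr ⟨e, heS, hx⟩)
    have hdisj_parts : ∀ e ∈ m₀, ∀ f ∈ S, Disjoint e f := by
      intro e he f hf
      have h1 : e ⊆ V \ S.biUnion id := by rw [← h0U]; exact subset_biUnion_of_mem id he
      exact disjoint_left.mpr
        (fun x hxe hxf => (mem_sdiff.mp (h1 hxe)).2 (mem_biUnion.mpr ⟨f, hf, hxf⟩))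
    refine ⟨m₀ ∪ S, mem_filter.mpr ⟨?_, subset_union_right⟩, ?_⟩
    · refine mem_pm.mpr ⟨?_, ?_, ?_⟩
      · intro e he
        rcases mem_union.mp he with h | h
        · exact h02 e h
        · exact h2 e h
      · intro e he f hf hef
        rcases mem_union.mp he with h | h <;> rcases mem_union.mp hf with h' | h'
        · exact h0d e h f h' hef
        · exact hdisj_parts e h f h'
        · exact (hdisj_parts f h' e h).symm
        · exact hdisj e h f h' hef
      · apply Finset.Subset.antisymm
        · intro x hx
          obtain ⟨f, hf, hxf⟩ := mem_biUnion.mp hx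
          rcases mem_union.mp hf with h | h
          · have : x ∈ m₀.biUnion id := mem_biUnion.mpr ⟨f, h, hxf⟩
            rw [h0U] at this
            exact (mem_sdiff.mp this).1
          · exact hSV (mem_biUnion.mpr ⟨f, h, hxf⟩)
        · intro x hxV
          by_cases hxS : x ∈ S.biUnion id
          · obtain ⟨f, hf, hxf⟩ := mem_biUnion.mp hxS
            exact mem_biUnion.mpr ⟨f, mem_union_right _ hf, hxf⟩
          · have : x ∈ m₀.biUnion id := by rw [h0U]; exact mem_sdiff.mpr ⟨hxV, hxS⟩
            obtain ⟨f, hf, hxf⟩ := mem_biUnion.mp this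
            exact mem_biUnion.mpr ⟨f, mem_union_left _ hf, hxf⟩
    · rw [union_sdiff_right]
      exact Finset.sdiff_eq_self_iff_disjoint.mpr
        (disjoint_left.mpr (fun e hem heS => hm₀S e hem heS))

lemma sum_choose_inter (P : Finset (Finset (Finset α))) (S : Finset (Finset α)) (k : ℕ) :
    ∑ m ∈ P, ((m ∩ S).card).choose k
      = ∑ T ∈ S.powersetCard k, (P.filter (fun m => T ⊆ m)).card := by
  have h1 : ∀ T, (P.filter (fun m => T ⊆ m)).card = ∑ m ∈ P, if T ⊆ m then 1 else 0 := by
    intro T; rw [Finset.card_filter]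
  simp only [h1]
  rw [Finset.sum_comm]
  refine sum_congr rfl fun m _ => Eq.symm ?_
  have h2 : (S.powersetCard k).filter (fun T => T ⊆ m) = (m ∩ S).powersetCard k := by
    ext T
    simp only [mem_filter, mem_powersetCard, subset_inter_iff]
    tauto
  calc ∑ T ∈ S.powersetCard k, (if T ⊆ m then 1 else 0)
      = ((S.powersetCard k).filter (fun T => T ⊆ m)).card := (Finset.card_filter _ _).symm
    _ = ((m ∩ S).powersetCard k).card := by rw [h2]
    _ = ((m ∩ S).card).choose k := by rw [card_powersetCard]

lemma bonf (t : ℕ) : (if 0 < t then 1 else 0) + t.choose 2 ≤ t.choose 1 + t.choose 3 := by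
  cases t with
  | zero => simp
  | succ s =>
    have h1 : (s + 1).choose 2 = s + s.choose 2 := by
      rw [Nat.choose_succ_succ s 1, Nat.choose_one_right]
    have h2 : (s + 1).choose 3 = s.choose 2 + s.choose 3 := Nat.choose_succ_succ s 2
    have h3 : (s + 1).choose 1 = s + 1 := Nat.choose_one_right _
    rw [if_pos (Nat.succ_pos s), h1, h2, h3]
    omega

lemma choose2_eq : ∀ k : ℕ, 2 * (k + 2).choose 2 = (k + 2) * (k + 1) := by
  intro k
  induction k with
  | zero => decide
  | succ j ih =>
    have h : (j + 1 + 2).choose 2 = (j + 2).choose 1 + (j + 2).choose 2 :=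
      Nat.choose_succ_succ (j + 2) 1
    rw [h, Nat.choose_one_right, Nat.mul_add, ih]
    ring
  
lemma choose3_eq : ∀ k : ℕ, 6 * (k + 3).choose 3 = (k + 3) * (k + 2) * (k + 1) := by
  intro k
  induction k with
  | zero => decide
  | succ j ih =>
    have h : (j + 1 + 3).choose 3 = (j + 3).choose 2 + (j + 3).choose 3 :=
      Nat.choose_succ_succ (j + 3) 2
    rw [h, Nat.mul_add, ih]
    have h2 := choose2_eq (j + 1)
    rw [show (j + 1 + 2 : ℕ) = j + 3 from by omega,
      show (j + 1 + 1 : ℕ) = j + 2 from by omega] at h2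
    calc 6 * ((j + 3).choose 2) + (j + 3) * (j + 2) * (j + 1)
        = 3 * (2 * ((j + 3).choose 2)) + (j + 3) * (j + 2) * (j + 1) := by ring
      _ = 3 * ((j + 3) * (j + 2)) + (j + 3) * (j + 2) * (j + 1) := by rw [h2]
      _ = (j + 1 + 3) * (j + 1 + 2) * (j + 1 + 1) := by ring

lemma arith (n : ℕ) (hn : 2 ≤ n) :
    5 * ((n - 2) * Nat.doubleFactorial (2 * (n - 2) - 1)
        + (n - 2).choose 3 * Nat.doubleFactorial (2 * (n - 4) - 1))
      < 2 * Nat.doubleFactorial (2 * n - 3)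
        + 5 * ((n - 2).choose 2 * Nat.doubleFactorial (2 * (n - 3) - 1)) := by
  obtain ⟨m, rfl⟩ : ∃ m, n = m + 2 := ⟨n - 2, by omega⟩
  clear hn
  match m with
  | 0 => decide
  | 1 => decide
  | 2 => decide
  | (k + 3) =>
    have e1 : 2 * (k + 3 + 2 - 2) - 1 = 2 * k + 3 + 2 := by omega
    have e2 : 2 * (k + 3 + 2 - 4) - 1 = 2 * k + 1 := by omega
    have e3 : 2 * (k + 3 + 2) - 3 = 2 * k + 5 + 2 := by omega
    have e4 : 2 * (k + 3 + 2 - 3) - 1 = 2 * k + 1 + 2 := by omega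
    have e5 : k + 3 + 2 - 2 = k + 3 := by omega
    rw [e1, e2, e3, e4, e5, Nat.doubleFactorial_add_two, Nat.doubleFactorial_add_two,
      Nat.doubleFactorial_add_two]
    rw [show (2 * k + 5 : ℕ) = 2 * k + 3 + 2 from by omega, Nat.doubleFactorial_add_two]
    rw [show (2 * k + 3 : ℕ) = 2 * k + 1 + 2 from by omega, Nat.doubleFactorial_add_two]
    have h3 := choose3_eq k
    have hc2 := choose2_eq (k + 1)
    rw [show (k + 1 + 2 : ℕ) = k + 3 from by omega,
      show (k + 1 + 1 : ℕ) = k + 2 from by omega] at hc2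
    set D := (2 * k + 1).doubleFactorial with hD
    have hDpos : 0 < D := Nat.doubleFactorial_pos _
    apply Nat.lt_of_mul_lt_mul_left (a := 6)
    have hL : 6 * (5 * ((k + 3) * ((2 * k + 1 + 2 + 2) * ((2 * k + 1 + 2) * D)) +
        (k + 3).choose 3 * D))
        = (30 * (k + 3) * (2 * k + 5) * (2 * k + 3) + 5 * ((k + 3) * (k + 2) * (k + 1))) * D := by
      calc 6 * (5 * ((k + 3) * ((2 * k + 1 + 2 + 2) * ((2 * k + 1 + 2) * D)) +
            (k + 3).choose 3 * D))
          = 30 * (k + 3) * (2 * k + 5) * (2 * k + 3) * D + 5 * (6 * (k + 3).choose 3) * D := by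
            ring
        _ = _ := by rw [h3]; ring
    have hR : 6 * (2 * ((2 * k + 1 + 2 + 2 + 2) * ((2 * k + 1 + 2 + 2) * ((2 * k + 1 + 2) * D))) +
        5 * ((k + 3).choose 2 * ((2 * k + 1 + 2) * D)))
        = (12 * (2 * k + 7) * (2 * k + 5) * (2 * k + 3)
            + 15 * ((k + 3) * (k + 2)) * (2 * k + 3)) * D := by
      calc 6 * (2 * ((2 * k + 1 + 2 + 2 + 2) * ((2 * k + 1 + 2 + 2) * ((2 * k + 1 + 2) * D))) +
            5 * ((k + 3).choose 2 * ((2 * k + 1 + 2) * D)))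
          = 12 * (2 * k + 7) * (2 * k + 5) * (2 * k + 3) * D
              + 15 * (2 * (k + 3).choose 2) * (2 * k + 3) * D := by ring
        _ = _ := by rw [hc2]; ring
    rw [hL, hR]
    apply mul_lt_mul_of_pos_right _ hDpos
    have hid : 12 * (2 * k + 7) * (2 * k + 5) * (2 * k + 3)
          + 15 * ((k + 3) * (k + 2)) * (2 * k + 3)
        = 30 * (k + 3) * (2 * k + 5) * (2 * k + 3) + 5 * ((k + 3) * (k + 2) * (k + 1))
          + (k ^ 3 + 45 * k ^ 2 + 164 * k + 150) := by ring
    rw [hid]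
    have hpos : 0 < k ^ 3 + 45 * k ^ 2 + 164 * k + 150 := by positivity
    exact Nat.lt_add_of_pos_right hpos

/-- A perfect matching of the complete graph on `2*n` vertices. -/
def IsPerfectMatching (n : ℕ) (m : Finset (Finset (Fin (2 * n)))) : Prop :=
  (∀ e ∈ m, e.card = 2) ∧ ∀ v : Fin (2 * n), ∃! e, e ∈ m ∧ v ∈ e

lemma pm_card_edges {α : Type*} [DecidableEq α] {V : Finset α} {m : Finset (Finset α)}
    (hm : m ∈ pm V) : 2 * m.card = V.card := by
  obtain ⟨h2, hd, hU⟩ := mem_pm.mp hm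
  have hbu : (m.biUnion id).card = ∑ e ∈ m, (id e).card :=
    card_biUnion (fun e he f hf hef => hd e he f hf hef)
  rw [← hU, hbu]
  symm
  calc ∑ e ∈ m, (id e).card = ∑ e ∈ m, 2 := sum_congr rfl (fun e he => h2 e he)
    _ = 2 * m.card := by rw [sum_const, smul_eq_mul, mul_comm]

lemma isPM_iff (n : ℕ) (m : Finset (Finset (Fin (2 * n)))) :
    IsPerfectMatching n m ↔ m ∈ pm (univ : Finset (Fin (2 * n))) := by
  constructor
  · rintro ⟨h2, hex⟩
    refine mem_pm.mpr ⟨h2, ?_, ?_⟩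
    · intro e he f hf hef
      rw [disjoint_left]
      intro x hxe hxf
      obtain ⟨g, _, hu⟩ := hex x
      exact hef ((hu e ⟨he, hxe⟩).trans (hu f ⟨hf, hxf⟩).symm)
    · apply eq_univ_of_forall
      intro x
      obtain ⟨g, ⟨hg, hxg⟩, _⟩ := hex x
      exact mem_biUnion.mpr ⟨g, hg, hxg⟩
  · intro hm
    obtain ⟨h2, hd, hU⟩ := mem_pm.mp hm
    refine ⟨h2, fun v => ?_⟩
    have hv : v ∈ m.biUnion id := by rw [hU]; exact mem_univ v
    obtain ⟨e, he, hve⟩ := mem_biUnion.mp hv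
    refine ⟨e, ⟨he, hve⟩, ?_⟩
    rintro f ⟨hf, hvf⟩
    by_contra hne
    exact (disjoint_left.mp (hd f hf e he hne)) hvf hve

theorem count_matchings_meeting (n : ℕ) (hn : 2 ≤ n)
    (m' : Finset (Finset (Fin (2 * n)))) (hm' : IsPerfectMatching n m')
    (i j : Fin (2 * n)) (hij : i ≠ j)
    (he : ({i, j} : Finset (Fin (2 * n))) ∉ m') :
    5 * Nat.card {m : Finset (Finset (Fin (2 * n))) //
        IsPerfectMatching n m ∧ ({i, j} : Finset (Fin (2 * n))) ∈ m ∧ ∃ e ∈ m, e ∈ m'} <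
      2 * Nat.doubleFactorial (2 * n - 3) := by
  classical
  have hpm' : m' ∈ pm (univ : Finset (Fin (2 * n))) := (isPM_iff n m').mp hm'
  obtain ⟨h2', hd', hU'⟩ := mem_pm.mp hpm'
  have hcardV : (univ : Finset (Fin (2 * n))).card = 2 * n := by simp
  have hm'card : m'.card = n := by
    have := pm_card_edges hpm'
    rw [hcardV] at this
    omega
  obtain ⟨ei, ⟨heim, hiei⟩, hui⟩ := hm'.2 i
  obtain ⟨ej, ⟨hejm, hjej⟩, huj⟩ := hm'.2 j
  have heij : ei ≠ ej := by
    intro h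
    have hsub : ({i, j} : Finset (Fin (2 * n))) ⊆ ei := by
      intro x hx
      rcases mem_insert.mp hx with rfl | hx
      · exact hiei
      · rw [mem_singleton] at hx; subst hx; rw [h]; exact hjej
    have heq : ({i, j} : Finset (Fin (2 * n))) = ei :=
      Finset.eq_of_subset_of_card_le hsub (by rw [h2' ei heim, card_pair hij])
    exact he (heq ▸ heim)
  set M2 : Finset (Finset (Fin (2 * n))) := m'.filter (fun e => ¬(i ∈ e ∨ j ∈ e)) with hM2
  have hM2card : M2.card = n - 2 := by
    have hsplit := card_filter_add_card_filter_not
      (s := m') (p := fun e => i ∈ e ∨ j ∈ e)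
    have h1 : m'.filter (fun e => i ∈ e ∨ j ∈ e) = {ei, ej} := by
      ext e
      simp only [mem_filter, mem_insert, mem_singleton]
      constructor
      · rintro ⟨hem, hie | hje⟩
        · exact Or.inl (hui e ⟨hem, hie⟩)
        · exact Or.inr (huj e ⟨hem, hje⟩)
      · rintro (rfl | rfl)
        · exact ⟨heim, Or.inl hiei⟩
        · exact ⟨hejm, Or.inr hjej⟩
    rw [h1] at hsplit
    have h2 : ({ei, ej} : Finset (Finset (Fin (2 * n)))).card = 2 := card_pair heij
    rw [← hM2] at hsplit
    omega
  set P := (pm (univ : Finset (Fin (2 * n)))).filter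
    (fun m => ({i, j} : Finset (Fin (2 * n))) ∈ m) with hP
  have hforced : ∀ k : ℕ, ∀ T ∈ M2.powersetCard k,
      (P.filter (fun m => T ⊆ m)).card = Nat.doubleFactorial (2 * (n - k - 1) - 1) := by
    intro k T hT
    obtain ⟨hTM2, hTcard⟩ := mem_powersetCard.mp hT
    have hTm' : T ⊆ m' := fun e heT => (mem_filter.mp (hTM2 heT)).1
    have hkn : k ≤ n - 2 := by
      rw [← hTcard, ← hM2card]
      exact card_le_card hTM2
    have hijT : ({i, j} : Finset (Fin (2 * n))) ∉ T := by
      intro h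
      exact (mem_filter.mp (hTM2 h)).2 (Or.inl (mem_insert_self i _))
    have hScard : (insert ({i, j} : Finset (Fin (2 * n))) T).card = k + 1 := by
      rw [card_insert_of_notMem hijT, hTcard]
    have hS2 : ∀ e ∈ insert ({i, j} : Finset (Fin (2 * n))) T, e.card = 2 := by
      intro e heS
      rcases mem_insert.mp heS with h | h
      · rw [h]; exact card_pair hij
      · exact h2' e (hTm' h)
    have hpair : ∀ g ∈ T, Disjoint ({i, j} : Finset (Fin (2 * n))) g := by
      intro g hg
      have hg2 := (mem_filter.mp (hTM2 hg)).2
      rw [disjoint_left]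
      intro x hx
      rcases mem_insert.mp hx with rfl | hx
      · exact fun hxg => hg2 (Or.inl hxg)
      · rw [mem_singleton] at hx; subst hx
        exact fun hxg => hg2 (Or.inr hxg)
    have hSdisj : ∀ e ∈ insert ({i, j} : Finset (Fin (2 * n))) T,
        ∀ f ∈ insert ({i, j} : Finset (Fin (2 * n))) T, e ≠ f → Disjoint e f := by
      intro e heS f hfS hef
      rcases mem_insert.mp heS with he1 | heT
      · rcases mem_insert.mp hfS with hf1 | hfT
        · exact absurd (he1.trans hf1.symm) hef
        · rw [he1]; exact hpair f hfT
      · rcases mem_insert.mp hfS with hf1 | hfT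
        · rw [hf1]; exact (hpair e heT).symm
        · exact hd' e (hTm' heT) f (hTm' hfT) hef
    have hUcard : ((insert ({i, j} : Finset (Fin (2 * n))) T).biUnion id).card
        = 2 * (k + 1) := by
      have hbu : ((insert ({i, j} : Finset (Fin (2 * n))) T).biUnion id).card
          = ∑ e ∈ insert ({i, j} : Finset (Fin (2 * n))) T, (id e).card :=
        card_biUnion (fun e heS f hfS hef => hSdisj e heS f hfS hef)
      rw [hbu]
      calc ∑ e ∈ insert ({i, j} : Finset (Fin (2 * n))) T, (id e).card
          = ∑ e ∈ insert ({i, j} : Finset (Fin (2 * n))) T, 2 :=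
            sum_congr rfl (fun e heS => hS2 e heS)
        _ = 2 * (k + 1) := by rw [sum_const, hScard, smul_eq_mul, mul_comm]
    have hcomp : ((univ : Finset (Fin (2 * n)))
        \ (insert ({i, j} : Finset (Fin (2 * n))) T).biUnion id).card = 2 * (n - k - 1) := by
      rw [card_sdiff_of_subset (subset_univ _), hcardV, hUcard]
      omega
    have hPT : P.filter (fun m => T ⊆ m)
        = (pm (univ : Finset (Fin (2 * n)))).filter
            (fun m => insert ({i, j} : Finset (Fin (2 * n))) T ⊆ m) := by
      rw [hP, filter_filter]
      apply filter_congr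
      intro m _
      rw [insert_subset_iff]
    rw [hPT, pm_forced_card hS2 hSdisj (subset_univ _), pm_card (n - k - 1) _ hcomp]
  have hSk : ∀ k : ℕ, (∑ m ∈ P, ((m ∩ M2).card).choose k)
      = (n - 2).choose k * Nat.doubleFactorial (2 * (n - k - 1) - 1) := by
    intro k
    rw [sum_choose_inter, sum_congr rfl (hforced k), sum_const, card_powersetCard, hM2card,
      smul_eq_mul]
  have hkey : (P.filter (fun m => 0 < (m ∩ M2).card)).card
        + ∑ m ∈ P, ((m ∩ M2).card).choose 2
      ≤ ∑ m ∈ P, ((m ∩ M2).card).choose 1 + ∑ m ∈ P, ((m ∩ M2).card).choose 3 := by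
    rw [Finset.card_filter, ← sum_add_distrib, ← sum_add_distrib]
    exact sum_le_sum (fun m _ => bonf _)
  have hNcard : Nat.card {m : Finset (Finset (Fin (2 * n))) //
        IsPerfectMatching n m ∧ ({i, j} : Finset (Fin (2 * n))) ∈ m ∧ ∃ e ∈ m, e ∈ m'}
      = (P.filter (fun m => 0 < (m ∩ M2).card)).card := by
    rw [Nat.card_eq_fintype_card, Fintype.card_subtype]
    congr 1
    ext m
    simp only [mem_filter, mem_univ, true_and, hP]
    constructor
    · rintro ⟨hpm, hijm, e, hem, hem'⟩
      have hmV := (isPM_iff n m).mp hpm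
      refine ⟨⟨hmV, hijm⟩, ?_⟩
      rw [card_pos]
      refine ⟨e, mem_inter.mpr ⟨hem, ?_⟩⟩
      rw [hM2, mem_filter]
      refine ⟨hem', ?_⟩
      obtain ⟨hm2, hmd, hmU⟩ := mem_pm.mp hmV
      have hee : e ≠ ({i, j} : Finset (Fin (2 * n))) := by
        intro h; exact he (h ▸ hem')
      have hdisj := hmd e hem _ hijm hee
      rintro (hie | hje)
      · exact (disjoint_left.mp hdisj) hie (mem_insert_self i _)
      · exact (disjoint_left.mp hdisj) hje (by simp)
    · rintro ⟨⟨hmV, hijm⟩, hpos⟩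
      obtain ⟨e, hee⟩ := card_pos.mp hpos
      obtain ⟨hem, heM2⟩ := mem_inter.mp hee
      exact ⟨(isPM_iff n m).mpr hmV, hijm, e, hem, (mem_filter.mp heM2).1⟩
  rw [hNcard]
  have h1 := hSk 1
  have h2 := hSk 2
  have h3 := hSk 3
  rw [Nat.choose_one_right, show n - 1 - 1 = n - 2 from by omega] at h1
  rw [show n - 2 - 1 = n - 3 from by omega] at h2
  rw [show n - 3 - 1 = n - 4 from by omega] at h3
  rw [h1, h2, h3] at hkey
  have harith := arith n hn
  linarith [harith, hkey]
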